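/- Let A_1,...,A_k be m-by-n real matrices and let A in R^{km x n} be their vertical stack, assumed to have rank n. Suppose s > k/2 and that for every nonzero vector v in the column space of A and for every subset S of {1,...,k} with |S| = s, the sum over i in S of ||v_i||_2 is strictly greater than the sum over i not in S of ||v_i||_2, where v_i denotes the i-th m-by-1 block of v. Then for every subset Sc of {1,...,k} with |Sc| = 2s - k, the stacked matrix A_{Sc} has rank n. -/

import Mathlib

/-- Euclidean norm of a vector in `ℝ^m`. -/
noncomputable def euclNorm {m : ℕ} (v : Fin m → ℝ) : ℝ :=
  Real.sqrt (∑ j, v j ^ 2)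

/-- The vertical stack of the matrices `A 1, ..., A k`. -/
def stack {k m n : ℕ} (A : Fin k → Matrix (Fin m) (Fin n) ℝ) :
    Matrix (Fin k × Fin m) (Fin n) ℝ :=
  Matrix.of fun p j => A p.1 p.2 j

lemma rank_eq_iff_ker {I : Type*} [Fintype I] {q : ℕ} (M : Matrix I (Fin q) ℝ) :
    M.rank = q ↔ LinearMap.ker M.mulVecLin = ⊥ := by
  have h := LinearMap.finrank_range_add_finrank_ker M.mulVecLin
  rw [Matrix.rank]
  simp only [Module.finrank_fintype_fun_eq_card, Fintype.card_fin] at h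
  constructor
  · intro hr
    rw [hr] at h
    have : Module.finrank ℝ (LinearMap.ker M.mulVecLin) = 0 := by omega
    exact Submodule.finrank_eq_zero.mp this
  · intro hk
    rw [hk] at h
    simpa using h

/-- If the stack `A` has rank `n`, `s > k/2`, and for every nonzero `v`
in the column space of `A` and every subset `S` of cardinality `s` the sum of the
block norms over `S` strictly exceeds the sum over the complement, then every
stacked submatrix over a subset of cardinality `2s - k` has rank `n`. -/
theorem rank_of_range_space_conditions {k m n s : ℕ}
    (A : Fin k → Matrix (Fin m) (Fin n) ℝ)
    (hrank : (stack A).rank = n)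
    (hs : k < 2 * s)
    (hcond : ∀ v : Fin k × Fin m → ℝ,
      (∃ u : Fin n → ℝ, (stack A).mulVec u = v) → v ≠ 0 →
      ∀ S : Finset (Fin k), S.card = s →
        ∑ i ∈ Sᶜ, euclNorm (fun j => v (i, j)) < ∑ i ∈ S, euclNorm (fun j => v (i, j))) :
    ∀ Sc : Finset (Fin k), Sc.card = 2 * s - k →
      (Matrix.of fun (p : ↥Sc × Fin m) (j : Fin n) => A p.1 p.2 j).rank = n := by
  intro Sc hSc
  by_cases hsk : s ≤ k
  swap
  · exfalso
    have := Finset.card_le_univ Sc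
    simp [Finset.card_univ] at this
    omega
  by_contra hB
  set B := (Matrix.of fun (p : ↥Sc × Fin m) (j : Fin n) => A p.1 p.2 j) with hBdef
  -- get nonzero kernel element
  have hker : LinearMap.ker B.mulVecLin ≠ ⊥ := fun h => hB ((rank_eq_iff_ker B).mpr h)
  obtain ⟨u, hu, hune⟩ := Submodule.exists_mem_ne_zero_of_ne_bot hker
  rw [LinearMap.mem_ker] at hu
  set v := (stack A).mulVec u with hv
  have hvne : v ≠ 0 := by
    intro h0
    have hkerA : LinearMap.ker (stack A).mulVecLin = ⊥ := (rank_eq_iff_ker _).mp hrank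
    have : u ∈ LinearMap.ker (stack A).mulVecLin := by
      rw [LinearMap.mem_ker]
      simpa [Matrix.mulVecLin_apply] using h0
    rw [hkerA, Submodule.mem_bot] at this
    exact hune this
  -- v vanishes on Sc blocks
  have hzero : ∀ i ∈ Sc, ∀ j, v (i, j) = 0 := by
    intro i hi j
    have := congrFun hu (⟨⟨i, hi⟩, j⟩ : ↥Sc × Fin m)
    simpa [hv, Matrix.mulVecLin_apply, Matrix.mulVec, dotProduct, stack, B] using this
  have hnormzero : ∀ i ∈ Sc, euclNorm (fun j => v (i, j)) = 0 := by
    intro i hi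
    simp [euclNorm, hzero i hi]
  -- combinatorics
  have hSccompl : Scᶜ.card = 2 * (k - s) := by
    have := Finset.card_compl Sc
    simp [Finset.card_univ] at this
    omega
  obtain ⟨T1, hT1sub, hT1card⟩ := Finset.exists_subset_card_eq (s := Scᶜ) (n := k - s) (by omega)
  set T2 := Scᶜ \ T1 with hT2
  have hT2card : T2.card = k - s := by
    rw [hT2, Finset.card_sdiff_of_subset hT1sub]; omega
  have hT2sub : T2 ⊆ Scᶜ := Finset.sdiff_subset
  have hd1 : Disjoint Sc T1 := disjoint_compl_right.mono_right hT1sub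
  have hd2 : Disjoint Sc T2 := disjoint_compl_right.mono_right hT2sub
  have hS1card : (Sc ∪ T1).card = s := by
    rw [Finset.card_union_of_disjoint hd1]; omega
  have hS2card : (Sc ∪ T2).card = s := by
    rw [Finset.card_union_of_disjoint hd2]; omega
  have hS1compl : (Sc ∪ T1)ᶜ = T2 := by
    rw [Finset.compl_union, hT2, Finset.sdiff_eq_inter_compl]
  have hS2compl : (Sc ∪ T2)ᶜ = T1 := by
    rw [Finset.compl_union, ← Finset.sdiff_eq_inter_compl, hT2, Finset.sdiff_sdiff_eq_self hT1sub]
  have h1 := hcond v ⟨u, rfl⟩ hvne (Sc ∪ T1) hS1card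
  have h2 := hcond v ⟨u, rfl⟩ hvne (Sc ∪ T2) hS2card
  rw [hS1compl, Finset.sum_union hd1, Finset.sum_eq_zero hnormzero, zero_add] at h1
  rw [hS2compl, Finset.sum_union hd2, Finset.sum_eq_zero hnormzero, zero_add] at h2
  linarith
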